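/- arXiv:2110.08089 — 2 statements merged into one kernel-verified Lean document; each statement's English description precedes it below -/
import Mathlib

section
/- Let d_n = c/log n for a constant c > 0, and ψ_j(d_n) = Γ(j+d_n)/(Γ(d_n)Γ(j+1)). If h = h_n = ⌊n^α⌋ for some α ∈ (0,1), then h^{-1} Σ_{l=0}^{h-1} (Σ_{j=0}^{l} ψ_j(d_n))² → e^{2cα} as n → ∞. -/
open Real Filter

/-- Fractional binomial coefficients `ψ_j(d) = Γ(j+d)/(Γ(d)Γ(j+1))`. -/
noncomputable def psi (d : ℝ) (j : ℕ) : ℝ :=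
  Real.Gamma ((j : ℝ) + d) / (Real.Gamma d * Real.Gamma ((j : ℝ) + 1))

lemma gamma_nat_pos (l : ℕ) : 0 < Real.Gamma ((l : ℝ) + 1) :=
  Real.Gamma_pos_of_pos (by positivity)

lemma psi_succ (d : ℝ) (hd : 0 < d) (l : ℕ) :
    psi d (l + 1) = psi d l * (((l : ℝ) + d) / ((l : ℝ) + 1)) := by
  have hld : ((l : ℝ) + d) ≠ 0 := by positivity
  have hl1 : ((l : ℝ) + 1) ≠ 0 := by positivity
  have h1 : Real.Gamma (((l + 1 : ℕ) : ℝ) + d) = ((l : ℝ) + d) * Real.Gamma ((l : ℝ) + d) := by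
    push_cast
    rw [show (l : ℝ) + 1 + d = ((l : ℝ) + d) + 1 by ring, Real.Gamma_add_one hld]
  have h2 : Real.Gamma (((l + 1 : ℕ) : ℝ) + 1) = ((l : ℝ) + 1) * Real.Gamma ((l : ℝ) + 1) := by
    push_cast
    rw [Real.Gamma_add_one hl1]
  have hgd : Real.Gamma d ≠ 0 := (Real.Gamma_pos_of_pos hd).ne'
  have hgl : Real.Gamma ((l : ℝ) + 1) ≠ 0 := (gamma_nat_pos l).ne'
  unfold psi
  rw [h1, h2]
  field_simp

lemma sum_psi_eq (d : ℝ) (hd : 0 < d) (l : ℕ) :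
    (∑ j ∈ Finset.range (l + 1), psi d j) = ∏ k ∈ Finset.range l, (1 + d / ((k : ℝ) + 1)) ∧
      psi d l * ((l : ℝ) + d) = d * ∏ k ∈ Finset.range l, (1 + d / ((k : ℝ) + 1)) := by
  induction l with
  | zero =>
      have hgd : Real.Gamma d ≠ 0 := (Real.Gamma_pos_of_pos hd).ne'
      have h0 : psi d 0 = 1 := by
        unfold psi
        simp [Real.Gamma_one, hgd]
      simp [h0]
  | succ l ih =>
      obtain ⟨h1, h2⟩ := ih
      set P : ℝ := ∏ k ∈ Finset.range l, (1 + d / ((k : ℝ) + 1)) with hP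
      have hl1 : ((l : ℝ) + 1) ≠ 0 := by positivity
      have hpsucc := psi_succ d hd l
      have hstep : psi d (l + 1) = d * P / ((l : ℝ) + 1) := by
        rw [hpsucc, ← h2]
        ring
      constructor
      · rw [Finset.sum_range_succ, Finset.prod_range_succ, h1, hstep, ← hP]
        field_simp
      · rw [Finset.prod_range_succ, ← hP]
        push_cast
        rw [hstep]
        field_simp


-- telescoping sum
lemma sum_Q (e : ℝ) (he : 0 < e) (h : ℕ) :
    ∑ l ∈ Finset.range h, ∏ k ∈ Finset.range l, (1 + e / ((k : ℝ) + 1))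
      = (h : ℝ) * (∏ k ∈ Finset.range h, (1 + e / ((k : ℝ) + 1))) / (1 + e) := by
  induction h with
  | zero => simp
  | succ h ih =>
      rw [Finset.sum_range_succ, ih, Finset.prod_range_succ]
      set Q : ℝ := ∏ k ∈ Finset.range h, (1 + e / ((k : ℝ) + 1)) with hQ
      have h1 : (1 : ℝ) + e ≠ 0 := by positivity
      have h2 : ((h : ℝ) + 1) ≠ 0 := by positivity
      push_cast
      field_simp
      ring

lemma sum_inv_sq_le (l : ℕ) :
    ∑ k ∈ Finset.range l, (1 / ((k : ℝ) + 1)) ^ 2 ≤ 2 := by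
  have key : ∀ m : ℕ, ∑ k ∈ Finset.range (m + 1), (1 / ((k : ℝ) + 1)) ^ 2 ≤ 2 - 1 / ((m : ℝ) + 1) := by
    intro m
    induction m with
    | zero => norm_num
    | succ m ih =>
        rw [Finset.sum_range_succ]
        have h1 : (0:ℝ) < (m : ℝ) + 1 := by positivity
        have h2 : (0:ℝ) < (m : ℝ) + 2 := by positivity
        have key2 : (1 / ((m : ℝ) + 1 + 1)) ^ 2 ≤ 1 / ((m : ℝ) + 1) - 1 / ((m : ℝ) + 1 + 1) := by
          rw [div_pow, div_sub_div _ _ h1.ne' (by positivity : ((m:ℝ) + 1 + 1) ≠ 0),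
            div_le_div_iff₀ (by positivity) (by positivity)]
          nlinarith
        push_cast at ih ⊢
        linarith
  cases l with
  | zero => simp
  | succ m =>
      have := key m
      have h1 : (0:ℝ) < 1 / ((m : ℝ) + 1) := by positivity
      linarith

lemma log_one_add_le {x : ℝ} (hx : 0 ≤ x) : Real.log (1 + x) ≤ x := by
  have := Real.log_le_sub_one_of_pos (show (0:ℝ) < 1 + x by linarith)
  linarith

lemma div_le_log_one_add {x : ℝ} (hx : 0 ≤ x) : x / (1 + x) ≤ Real.log (1 + x) := by
  have h1 : (0:ℝ) < 1 + x := by linarith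
  have h2 : (0:ℝ) < (1 + x)⁻¹ := by positivity
  have h3 := Real.log_le_sub_one_of_pos h2
  rw [Real.log_inv] at h3
  have h5 : x / (1 + x) = 1 - (1 + x)⁻¹ := by field_simp; ring
  linarith [h5.le, h5.ge]

lemma le_log_one_add {x : ℝ} (hx : 0 ≤ x) : x - x ^ 2 ≤ Real.log (1 + x) := by
  have h1 : (0:ℝ) < 1 + x := by linarith
  have h2 := div_le_log_one_add hx
  have h5 : x - x ^ 2 ≤ x / (1 + x) := by
    rw [le_div_iff₀ h1]
    nlinarith [sq_nonneg x]
  linarith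

lemma tele_log (h : ℕ) :
    ∑ k ∈ Finset.range h, (Real.log ((k : ℝ) + 2) - Real.log ((k : ℝ) + 1))
      = Real.log ((h : ℝ) + 1) := by
  have h0 := Finset.sum_range_sub (fun k : ℕ => Real.log ((k : ℝ) + 1)) h
  simp only [Nat.cast_zero, zero_add, Real.log_one, sub_zero] at h0
  rw [← h0]
  apply Finset.sum_congr rfl
  intro k _
  congr 2
  push_cast
  ring

-- harmonic bounds
lemma harmonic_lower (h : ℕ) :
    Real.log ((h : ℝ) + 1) ≤ ∑ k ∈ Finset.range h, (1 / ((k : ℝ) + 1)) := by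
  rw [← tele_log h]
  apply Finset.sum_le_sum
  intro k _
  have hk1 : (0:ℝ) < (k : ℝ) + 1 := by positivity
  rw [← Real.log_div (by positivity) hk1.ne']
  have h2 : ((k : ℝ) + 2) / ((k : ℝ) + 1) = 1 + 1 / ((k : ℝ) + 1) := by
    field_simp
    ring
  rw [h2]
  exact log_one_add_le (by positivity)

lemma harmonic_upper (h : ℕ) (hh : 1 ≤ h) :
    ∑ k ∈ Finset.range h, (1 / ((k : ℝ) + 1)) ≤ 1 + Real.log h := by
  obtain ⟨m, rfl⟩ : ∃ m, h = m + 1 := ⟨h - 1, (Nat.succ_pred_eq_of_pos hh).symm⟩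
  rw [Finset.sum_range_succ' (fun k => 1 / ((k:ℝ)+1)) m]
  have key : ∀ k : ℕ, 1 / ((k : ℝ) + 2) ≤ Real.log ((k : ℝ) + 2) - Real.log ((k : ℝ) + 1) := by
    intro k
    have hk1 : (0:ℝ) < (k : ℝ) + 1 := by positivity
    rw [← Real.log_div (by positivity) hk1.ne']
    have h2 : ((k : ℝ) + 2) / ((k : ℝ) + 1) = 1 + 1 / ((k : ℝ) + 1) := by
      field_simp
      ring
    rw [h2]
    have h3 := div_le_log_one_add (show (0:ℝ) ≤ 1 / ((k:ℝ)+1) by positivity)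
    have h4 : (1 / ((k:ℝ)+1)) / (1 + 1 / ((k:ℝ)+1)) = 1 / ((k:ℝ)+2) := by
      field_simp
      ring
    rw [h4] at h3
    exact h3
  have hsum : ∑ k ∈ Finset.range m, (1 / ((k : ℝ) + 1 + 1)) ≤ Real.log ((m : ℝ) + 1) := by
    rw [← tele_log m]
    apply Finset.sum_le_sum
    intro k _
    rw [show ((k:ℝ) + 1 + 1) = (k:ℝ) + 2 by ring]
    exact key k
  push_cast
  norm_num at hsum ⊢
  linarith

lemma Q_pos (e : ℝ) (he : 0 ≤ e) (h : ℕ) :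
    0 < ∏ k ∈ Finset.range h, (1 + e / ((k : ℝ) + 1)) :=
  Finset.prod_pos fun k _ => by positivity

lemma prod_sq_lower (d : ℝ) (hd : 0 ≤ d) (l : ℕ) :
    ∏ k ∈ Finset.range l, (1 + 2 * d / ((k : ℝ) + 1))
      ≤ (∏ k ∈ Finset.range l, (1 + d / ((k : ℝ) + 1))) ^ 2 := by
  rw [← Finset.prod_pow]
  apply Finset.prod_le_prod
  · intro k _; positivity
  · intro k _
    have hx : 0 ≤ d / ((k : ℝ) + 1) := by positivity
    have h2 : 2 * d / ((k : ℝ) + 1) = 2 * (d / ((k : ℝ) + 1)) := by ring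
    rw [h2]
    nlinarith [sq_nonneg (d / ((k : ℝ) + 1))]

lemma prod_sq_upper (d : ℝ) (hd : 0 ≤ d) (l : ℕ) :
    (∏ k ∈ Finset.range l, (1 + d / ((k : ℝ) + 1))) ^ 2
      ≤ (∏ k ∈ Finset.range l, (1 + 2 * d / ((k : ℝ) + 1))) * Real.exp (2 * d ^ 2) := by
  rw [← Finset.prod_pow]
  calc ∏ k ∈ Finset.range l, (1 + d / ((k : ℝ) + 1)) ^ 2
      ≤ ∏ k ∈ Finset.range l, ((1 + 2 * d / ((k : ℝ) + 1)) * Real.exp ((d / ((k : ℝ) + 1)) ^ 2)) := by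
        apply Finset.prod_le_prod
        · intro k _; positivity
        · intro k _
          set x : ℝ := d / ((k : ℝ) + 1) with hxdef
          have hx : 0 ≤ x := by positivity
          have he : x ^ 2 + 1 ≤ Real.exp (x ^ 2) := Real.add_one_le_exp _
          have h2 : 2 * d / ((k : ℝ) + 1) = 2 * x := by rw [hxdef]; ring
          rw [h2]
          calc (1 + x) ^ 2 ≤ (1 + 2 * x) * (x ^ 2 + 1) := by nlinarith
            _ ≤ (1 + 2 * x) * Real.exp (x ^ 2) := by
                apply mul_le_mul_of_nonneg_left he (by linarith)
    _ = (∏ k ∈ Finset.range l, (1 + 2 * d / ((k : ℝ) + 1)))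
          * Real.exp (∑ k ∈ Finset.range l, (d / ((k : ℝ) + 1)) ^ 2) := by
        rw [Finset.prod_mul_distrib, Real.exp_sum]
    _ ≤ (∏ k ∈ Finset.range l, (1 + 2 * d / ((k : ℝ) + 1))) * Real.exp (2 * d ^ 2) := by
        apply mul_le_mul_of_nonneg_left _ (Q_pos (2*d) (by linarith) l).le
        apply Real.exp_le_exp.mpr
        have : ∑ k ∈ Finset.range l, (d / ((k : ℝ) + 1)) ^ 2
            = d ^ 2 * ∑ k ∈ Finset.range l, (1 / ((k : ℝ) + 1)) ^ 2 := by
          rw [Finset.mul_sum]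
          apply Finset.sum_congr rfl
          intro k _
          rw [div_pow, div_pow]
          ring
        rw [this]
        have h2 := sum_inv_sq_le l
        nlinarith [sq_nonneg d]

lemma logQ_le (d : ℝ) (hd : 0 < d) (h : ℕ) (hh : 1 ≤ h) :
    Real.log (∏ k ∈ Finset.range h, (1 + 2 * d / ((k : ℝ) + 1)))
      ≤ 2 * d * (1 + Real.log h) := by
  rw [Real.log_prod (fun k _ => by positivity)]
  calc ∑ k ∈ Finset.range h, Real.log (1 + 2 * d / ((k : ℝ) + 1))
      ≤ ∑ k ∈ Finset.range h, 2 * d / ((k : ℝ) + 1) := by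
        apply Finset.sum_le_sum
        intro k _
        exact log_one_add_le (by positivity)
    _ = 2 * d * ∑ k ∈ Finset.range h, (1 / ((k : ℝ) + 1)) := by
        rw [Finset.mul_sum]
        apply Finset.sum_congr rfl
        intro k _
        ring
    _ ≤ 2 * d * (1 + Real.log h) := by
        apply mul_le_mul_of_nonneg_left (harmonic_upper h hh) (by linarith)

lemma le_logQ (d : ℝ) (hd : 0 < d) (h : ℕ) (hh : 1 ≤ h) :
    2 * d * Real.log h - 8 * d ^ 2
      ≤ Real.log (∏ k ∈ Finset.range h, (1 + 2 * d / ((k : ℝ) + 1))) := by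
  rw [Real.log_prod (fun k _ => by positivity)]
  have key : ∀ k : ℕ, 2 * d / ((k : ℝ) + 1) - (2 * d / ((k : ℝ) + 1)) ^ 2
      ≤ Real.log (1 + 2 * d / ((k : ℝ) + 1)) := fun k => le_log_one_add (by positivity)
  have hsum : ∑ k ∈ Finset.range h, (2 * d / ((k : ℝ) + 1) - (2 * d / ((k : ℝ) + 1)) ^ 2)
      ≤ ∑ k ∈ Finset.range h, Real.log (1 + 2 * d / ((k : ℝ) + 1)) :=
    Finset.sum_le_sum fun k _ => key k
  have e1 : ∑ k ∈ Finset.range h, (2 * d / ((k : ℝ) + 1) - (2 * d / ((k : ℝ) + 1)) ^ 2)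
      = 2 * d * (∑ k ∈ Finset.range h, (1 / ((k : ℝ) + 1)))
        - 4 * d ^ 2 * (∑ k ∈ Finset.range h, (1 / ((k : ℝ) + 1)) ^ 2) := by
    rw [Finset.sum_sub_distrib, Finset.mul_sum, Finset.mul_sum]
    congr 1
    · apply Finset.sum_congr rfl; intro k _; ring
    · apply Finset.sum_congr rfl; intro k _; rw [div_pow, div_pow]; ring
  have h2 := sum_inv_sq_le h
  have h3 : Real.log h ≤ ∑ k ∈ Finset.range h, (1 / ((k : ℝ) + 1)) := by
    have := harmonic_lower h
    have hmono : Real.log (h : ℝ) ≤ Real.log ((h : ℝ) + 1) := by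
      apply Real.log_le_log (by exact_mod_cast Nat.pos_of_ne_zero (by omega)) (by linarith)
    linarith
  have h4 : 4 * d ^ 2 * (∑ k ∈ Finset.range h, (1 / ((k : ℝ) + 1)) ^ 2) ≤ 8 * d ^ 2 := by
    nlinarith [sq_nonneg d]
  have h5 : 2 * d * Real.log h ≤ 2 * d * ∑ k ∈ Finset.range h, (1 / ((k : ℝ) + 1)) := by
    apply mul_le_mul_of_nonneg_left h3 (by linarith)
  linarith

lemma main_bounds (d : ℝ) (hd : 0 < d) (h : ℕ) (hh : 1 ≤ h) :
    Real.exp (2 * d * Real.log h - 8 * d ^ 2) / (1 + 2 * d)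
        ≤ (h : ℝ)⁻¹ * ∑ l ∈ Finset.range h, (∑ j ∈ Finset.range (l + 1), psi d j) ^ 2
      ∧ (h : ℝ)⁻¹ * ∑ l ∈ Finset.range h, (∑ j ∈ Finset.range (l + 1), psi d j) ^ 2
        ≤ Real.exp (2 * d * (1 + Real.log h) + 2 * d ^ 2) / (1 + 2 * d) := by
  have hhR : (0 : ℝ) < (h : ℝ) := by exact_mod_cast Nat.pos_of_ne_zero (by omega)
  have h12d : (0 : ℝ) < 1 + 2 * d := by linarith
  set Q : ℝ := ∏ k ∈ Finset.range h, (1 + 2 * d / ((k : ℝ) + 1)) with hQdef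
  have hQpos : 0 < Q := Q_pos (2 * d) (by linarith) h
  have hrw : ∑ l ∈ Finset.range h, (∑ j ∈ Finset.range (l + 1), psi d j) ^ 2
      = ∑ l ∈ Finset.range h, (∏ k ∈ Finset.range l, (1 + d / ((k : ℝ) + 1))) ^ 2 :=
    Finset.sum_congr rfl fun l _ => by rw [(sum_psi_eq d hd l).1]
  have hsumQ : ∑ l ∈ Finset.range h, ∏ k ∈ Finset.range l, (1 + 2 * d / ((k : ℝ) + 1))
      = (h : ℝ) * Q / (1 + 2 * d) := sum_Q (2 * d) (by linarith) h
  have hinvQ : (h : ℝ)⁻¹ * ((h : ℝ) * Q / (1 + 2 * d)) = Q / (1 + 2 * d) := by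
    field_simp
  have hQlow : Real.exp (2 * d * Real.log h - 8 * d ^ 2) ≤ Q := by
    calc Real.exp (2 * d * Real.log h - 8 * d ^ 2)
        ≤ Real.exp (Real.log Q) := Real.exp_le_exp.mpr (le_logQ d hd h hh)
      _ = Q := Real.exp_log hQpos
  have hQhigh : Q ≤ Real.exp (2 * d * (1 + Real.log h)) := by
    calc Q = Real.exp (Real.log Q) := (Real.exp_log hQpos).symm
      _ ≤ Real.exp (2 * d * (1 + Real.log h)) := Real.exp_le_exp.mpr (logQ_le d hd h hh)
  constructor
  · calc Real.exp (2 * d * Real.log h - 8 * d ^ 2) / (1 + 2 * d)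
        ≤ Q / (1 + 2 * d) := by
          exact div_le_div_of_nonneg_right hQlow h12d.le
      _ = (h : ℝ)⁻¹ * ∑ l ∈ Finset.range h, ∏ k ∈ Finset.range l, (1 + 2 * d / ((k : ℝ) + 1)) := by
          rw [hsumQ, hinvQ]
      _ ≤ (h : ℝ)⁻¹ * ∑ l ∈ Finset.range h, (∏ k ∈ Finset.range l, (1 + d / ((k : ℝ) + 1))) ^ 2 := by
          apply mul_le_mul_of_nonneg_left _ (by positivity)
          exact Finset.sum_le_sum fun l _ => prod_sq_lower d hd.le l
      _ = (h : ℝ)⁻¹ * ∑ l ∈ Finset.range h, (∑ j ∈ Finset.range (l + 1), psi d j) ^ 2 := by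
          rw [hrw]
  · calc (h : ℝ)⁻¹ * ∑ l ∈ Finset.range h, (∑ j ∈ Finset.range (l + 1), psi d j) ^ 2
        = (h : ℝ)⁻¹ * ∑ l ∈ Finset.range h, (∏ k ∈ Finset.range l, (1 + d / ((k : ℝ) + 1))) ^ 2 := by
          rw [hrw]
      _ ≤ (h : ℝ)⁻¹ * ∑ l ∈ Finset.range h,
            ((∏ k ∈ Finset.range l, (1 + 2 * d / ((k : ℝ) + 1))) * Real.exp (2 * d ^ 2)) := by
          apply mul_le_mul_of_nonneg_left _ (by positivity)
          exact Finset.sum_le_sum fun l _ => prod_sq_upper d hd.le l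
      _ = (h : ℝ)⁻¹ * (((h : ℝ) * Q / (1 + 2 * d)) * Real.exp (2 * d ^ 2)) := by
          rw [← Finset.sum_mul, hsumQ]
      _ = Q * Real.exp (2 * d ^ 2) / (1 + 2 * d) := by
          field_simp
      _ ≤ Real.exp (2 * d * (1 + Real.log h)) * Real.exp (2 * d ^ 2) / (1 + 2 * d) := by
          apply div_le_div_of_nonneg_right _ h12d.le
          exact mul_le_mul_of_nonneg_right hQhigh (Real.exp_pos _).le
      _ = Real.exp (2 * d * (1 + Real.log h) + 2 * d ^ 2) / (1 + 2 * d) := by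
          rw [← Real.exp_add]

lemma half_le_floor {x : ℝ} (hx : 1 ≤ x) : x / 2 ≤ (⌊x⌋₊ : ℝ) := by
  have h1 : (1 : ℝ) ≤ (⌊x⌋₊ : ℝ) := by
    have : (1 : ℕ) ≤ ⌊x⌋₊ := Nat.le_floor (by exact_mod_cast hx)
    exact_mod_cast this
  rcases le_or_gt x 2 with h | h
  · linarith
  · have := Nat.sub_one_lt_floor x
    linarith

/-- Under the local alternatives `d_n = c/log n`, with `h_n = ⌊n^α⌋`, `α ∈ (0,1)`,
`h_n⁻¹ Σ_{l=0}^{h_n-1} (Σ_{j=0}^{l} ψ_j(d_n))² → e^{2cα}`. -/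
theorem stmt_9 (c α : ℝ) (hc : 0 < c) (hα : α ∈ Set.Ioo (0 : ℝ) 1) :
    Tendsto (fun n : ℕ =>
        ((Nat.floor ((n : ℝ) ^ α) : ℝ))⁻¹ *
          ∑ l ∈ Finset.range (Nat.floor ((n : ℝ) ^ α)),
            (∑ j ∈ Finset.range (l + 1), psi (c / Real.log n) j) ^ 2)
      atTop (nhds (Real.exp (2 * c * α))) := by
  obtain ⟨hα0, hα1⟩ := hα
  set D : ℕ → ℝ := fun n => c / Real.log n with hD
  set H : ℕ → ℕ := fun n => Nat.floor ((n : ℝ) ^ α) with hH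
  -- basic eventual facts
  have hev : ∀ᶠ n : ℕ in atTop, (2 : ℝ) ≤ (n : ℝ) := by
    filter_upwards [eventually_ge_atTop 2] with n hn
    exact_mod_cast hn
  have hlogtop : Tendsto (fun n : ℕ => Real.log n) atTop atTop :=
    Real.tendsto_log_atTop.comp tendsto_natCast_atTop_atTop
  have hDlim : Tendsto D atTop (nhds 0) := Tendsto.div_atTop tendsto_const_nhds hlogtop
  -- facts for n ≥ 2
  have hfacts : ∀ n : ℕ, (2 : ℝ) ≤ (n : ℝ) →
      0 < Real.log n ∧ 0 < D n ∧ 1 ≤ H n ∧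
        α * Real.log n - Real.log 2 ≤ Real.log (H n) ∧ Real.log (H n) ≤ α * Real.log n := by
    intro n hn
    have hn0 : (0 : ℝ) < n := by linarith
    have hlog : 0 < Real.log n := Real.log_pos (by linarith)
    have hd : 0 < D n := div_pos hc hlog
    have hx1 : (1 : ℝ) ≤ (n : ℝ) ^ α := by
      apply Real.one_le_rpow (by linarith) hα0.le
    have hh1 : 1 ≤ H n := Nat.le_floor (by exact_mod_cast hx1)
    have hhpos : (0 : ℝ) < (H n : ℝ) := by exact_mod_cast Nat.pos_of_ne_zero (by omega)
    have hfl : ((H n : ℝ)) ≤ (n : ℝ) ^ α := Nat.floor_le (by positivity)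
    have hfl2 : (n : ℝ) ^ α / 2 ≤ (H n : ℝ) := half_le_floor hx1
    have hlogrpow : Real.log ((n : ℝ) ^ α) = α * Real.log n := Real.log_rpow hn0 α
    refine ⟨hlog, hd, hh1, ?_, ?_⟩
    · have : Real.log ((n : ℝ) ^ α / 2) ≤ Real.log (H n) :=
        Real.log_le_log (by positivity) hfl2
      rw [Real.log_div (by positivity) (by norm_num), hlogrpow] at this
      linarith
    · have := Real.log_le_log hhpos hfl
      rw [hlogrpow] at this
      exact this
  -- D n * log (H n) → c * α
  have hDlogH : Tendsto (fun n => D n * Real.log (H n)) atTop (nhds (c * α)) := by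
    have hlo : Tendsto (fun n : ℕ => c * α - (c * Real.log 2) / Real.log n) atTop
        (nhds (c * α)) := by
      have : Tendsto (fun n : ℕ => (c * Real.log 2) / Real.log n) atTop (nhds 0) :=
        Tendsto.div_atTop tendsto_const_nhds hlogtop
      simpa using tendsto_const_nhds.sub this
    apply tendsto_of_tendsto_of_tendsto_of_le_of_le' hlo tendsto_const_nhds
    · filter_upwards [hev] with n hn
      obtain ⟨hlog, hd, hh1, hlb, hub⟩ := hfacts n hn
      have : D n * (α * Real.log n - Real.log 2) ≤ D n * Real.log (H n) :=
        mul_le_mul_of_nonneg_left hlb hd.le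
      calc c * α - (c * Real.log 2) / Real.log n
          = D n * (α * Real.log n - Real.log 2) := by
            rw [hD]
            field_simp
        _ ≤ D n * Real.log (H n) := this
    · filter_upwards [hev] with n hn
      obtain ⟨hlog, hd, hh1, hlb, hub⟩ := hfacts n hn
      have : D n * Real.log (H n) ≤ D n * (α * Real.log n) :=
        mul_le_mul_of_nonneg_left hub hd.le
      calc D n * Real.log (H n) ≤ D n * (α * Real.log n) := this
        _ = c * α := by
          rw [hD]
          field_simp
  -- limits of bounds
  have hD2 : Tendsto (fun n => (D n) ^ 2) atTop (nhds (0 : ℝ)) := by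
    have := hDlim.mul hDlim
    simpa [pow_two] using this
  have hLo : Tendsto (fun n => Real.exp (2 * D n * Real.log (H n) - 8 * (D n) ^ 2) / (1 + 2 * D n))
      atTop (nhds (Real.exp (2 * c * α))) := by
    have ha : Tendsto (fun n => 2 * D n * Real.log (H n)) atTop (nhds (2 * (c * α))) := by
      have := hDlogH.const_mul 2
      simpa [mul_assoc] using this
    have hb : Tendsto (fun n => 8 * (D n) ^ 2) atTop (nhds 0) := by
      simpa using hD2.const_mul 8
    have h1 : Tendsto (fun n => 2 * D n * Real.log (H n) - 8 * (D n) ^ 2) atTop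
        (nhds (2 * (c * α))) := by
      simpa using ha.sub hb
    have h2 : Tendsto (fun n => 1 + 2 * D n) atTop (nhds 1) := by
      simpa using tendsto_const_nhds.add (hDlim.const_mul 2)
    have h3 := ((Real.continuous_exp.tendsto _).comp h1).div h2 (by norm_num)
    simp only [div_one] at h3
    convert h3 using 2
    · rfl
    · rw [mul_assoc]
  have hUp : Tendsto (fun n =>
      Real.exp (2 * D n * (1 + Real.log (H n)) + 2 * (D n) ^ 2) / (1 + 2 * D n))
      atTop (nhds (Real.exp (2 * c * α))) := by
    have ha : Tendsto (fun n => 2 * D n * (1 + Real.log (H n))) atTop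
        (nhds (2 * (c * α))) := by
      have : (fun n => 2 * D n * (1 + Real.log (H n)))
          = fun n => 2 * D n + 2 * (D n * Real.log (H n)) := by
        funext n; ring
      rw [this]
      simpa using ((hDlim.const_mul 2).add (hDlogH.const_mul 2))
    have hb : Tendsto (fun n => 2 * (D n) ^ 2) atTop (nhds 0) := by
      simpa using hD2.const_mul 2
    have h1 : Tendsto (fun n => 2 * D n * (1 + Real.log (H n)) + 2 * (D n) ^ 2) atTop
        (nhds (2 * (c * α))) := by
      simpa using ha.add hb
    have h2 : Tendsto (fun n => 1 + 2 * D n) atTop (nhds 1) := by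
      simpa using tendsto_const_nhds.add (hDlim.const_mul 2)
    have h3 := ((Real.continuous_exp.tendsto _).comp h1).div h2 (by norm_num)
    simp only [div_one] at h3
    convert h3 using 2
    · rfl
    · rw [mul_assoc]
  -- squeeze
  apply tendsto_of_tendsto_of_tendsto_of_le_of_le' hLo hUp
  · filter_upwards [hev] with n hn
    obtain ⟨hlog, hd, hh1, _, _⟩ := hfacts n hn
    exact (main_bounds (D n) hd (H n) hh1).1
  · filter_upwards [hev] with n hn
    obtain ⟨hlog, hd, hh1, _, _⟩ := hfacts n hn
    exact (main_bounds (D n) hd (H n) hh1).2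
end

section
/- Let (X_i)_{i=1}^n be a zero-mean m-dependent sequence in L^4 with sup_i ||X_i||_4 ≤ M, and let K be a bounded kernel supported on [-1,1], b_n a bandwidth. Then max_{1≤i≤n} ||Σ_{j=1}^n K((t_i - t_j)/b_n) X_j||_4 = O(√(nb_n)·m), where t_j = j/n. -/
open Real MeasureTheory ProbabilityTheory Filter
open scoped ENNReal

set_option linter.unusedSectionVars false
set_option linter.unusedVariables false

section Helpers

variable {Ω : Type} [MeasurableSpace Ω] {μ : Measure Ω} [IsProbabilityMeasure μ]


lemma enn_half : (1/2 : ℝ≥0∞) = 1/4 + 1/4 := by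
  rw [ENNReal.div_add_div_same]
  rw [ENNReal.div_eq_div_iff] <;> norm_num

lemma enn_one : (1 : ℝ≥0∞)/1 = 1/2 + 1/2 := by
  rw [show (1:ℝ≥0∞)/1 = 1 by simp]
  rw [ENNReal.div_add_div_same, one_add_one_eq_two, ENNReal.div_self] <;> norm_num

lemma memL2_mul {f g : Ω → ℝ} (hf : MemLp f 4 μ) (hg : MemLp g 4 μ) :
    MemLp (fun ω => f ω * g ω) 2 μ := by
  have h := hg.smul hf (p := 4) (q := 4) (r := 2) (hpqr := ⟨by simpa [one_div] using enn_half.symm⟩)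
  exact h

lemma integrable_mul4 {f g h k : Ω → ℝ} (hf : MemLp f 4 μ) (hg : MemLp g 4 μ)
    (hh : MemLp h 4 μ) (hk : MemLp k 4 μ) :
    Integrable (fun ω => f ω * g ω * h ω * k ω) μ := by
  have h2 := (memL2_mul hh hk).smul (memL2_mul hf hg) (r := 1) (hpqr := ⟨by simpa [one_div] using enn_one.symm⟩)
  rw [← memLp_one_iff_integrable]
  have : ((fun ω => f ω * g ω) • fun ω => h ω * k ω) = fun ω => f ω * g ω * h ω * k ω := by
    funext ω; simp [smul_eq_mul]; ring
  rwa [this] at h2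

lemma sq_moment_le {Y : Ω → ℝ} (hY : MemLp Y 4 μ) {B : ℝ} (hB : 0 ≤ B)
    (h4 : ∫ ω, (Y ω)^4 ∂μ ≤ B^4) : ∫ ω, (Y ω)^2 ∂μ ≤ B^2 := by
  have hY2 : MemLp (fun ω => (Y ω)^2) (ENNReal.ofReal 2) μ := by
    rw [ENNReal.ofReal_ofNat]
    simpa [pow_two] using memL2_mul hY hY
  have hone : MemLp (fun _ : Ω => (1:ℝ)) (ENNReal.ofReal 2) μ := memLp_const 1
  have hconj : Real.HolderConjugate 2 2 := Real.HolderConjugate.two_two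
  have h := integral_mul_le_Lp_mul_Lq_of_nonneg hconj
    (f := fun ω => (Y ω)^2) (g := fun _ => 1)
    (ae_of_all _ fun ω => by positivity) (ae_of_all _ fun _ => zero_le_one) hY2 hone
  simp only [mul_one] at h
  have h1 : ∀ ω, ((Y ω)^2) ^ (2:ℝ) = (Y ω)^4 := by
    intro ω
    rw [show (2:ℝ) = ((2:ℕ):ℝ) by norm_num, Real.rpow_natCast]
    ring
  rw [integral_congr_ae (ae_of_all _ h1)] at h
  have h2 : (∫ _ : Ω, (1:ℝ) ^ (2:ℝ) ∂μ) = 1 := by simp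
  rw [h2] at h
  simp only [Real.one_rpow, mul_one] at h
  have h3 : (∫ ω, (Y ω)^4 ∂μ) ^ ((1:ℝ)/2) ≤ (B^4) ^ ((1:ℝ)/2) :=
    Real.rpow_le_rpow (integral_nonneg fun ω => by positivity) h4 (by norm_num)
  have h4' : (B^4 : ℝ) ^ ((1:ℝ)/2) = B^2 := by
    rw [show (B:ℝ)^4 = (B^2)^2 by ring, ← Real.rpow_natCast (B^2) 2,
      ← Real.rpow_mul (by positivity)]
    norm_num
  calc ∫ ω, (Y ω)^2 ∂μ ≤ (∫ ω, (Y ω)^4 ∂μ) ^ ((1:ℝ)/2) := h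
    _ ≤ (B^4) ^ ((1:ℝ)/2) := h3
    _ = B^2 := h4'



lemma norm_rpow_four (x : ℝ) : ‖x‖ ^ ((4:ℝ≥0∞).toReal) = x^4 := by
  rw [show ((4:ℝ≥0∞).toReal) = ((4:ℕ):ℝ) by simp, Real.rpow_natCast]
  rw [Real.norm_eq_abs]
  rw [← abs_pow]
  exact abs_of_nonneg (by positivity)

lemma moment4_le_of_eLpNorm {f : Ω → ℝ} (hf : MemLp f 4 μ) {M : ℝ} (hM : 0 ≤ M)
    (h : eLpNorm f 4 μ ≤ ENNReal.ofReal M) : ∫ ω, (f ω)^4 ∂μ ≤ M^4 := by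
  rw [hf.eLpNorm_eq_integral_rpow_norm (by norm_num) (by norm_num)] at h
  rw [ENNReal.ofReal_le_ofReal_iff hM] at h
  have hI : (∫ ω, ‖f ω‖ ^ ((4:ℝ≥0∞).toReal) ∂μ) = ∫ ω, (f ω)^4 ∂μ :=
    integral_congr_ae (ae_of_all _ fun ω => norm_rpow_four (f ω))
  rw [hI] at h
  have hInn : 0 ≤ ∫ ω, (f ω)^4 ∂μ := integral_nonneg fun ω => by positivity
  have := pow_le_pow_left₀ (Real.rpow_nonneg hInn _) h 4
  rwa [← Real.rpow_natCast ((∫ ω, (f ω)^4 ∂μ) ^ ((4:ℝ≥0∞).toReal)⁻¹) 4,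
    ← Real.rpow_mul hInn, show (((4:ℝ≥0∞).toReal)⁻¹ * ((4:ℕ):ℝ)) = 1 by norm_num,
    Real.rpow_one] at this

lemma eLpNorm_le_of_moment4 {f : Ω → ℝ} (hf : MemLp f 4 μ) {D : ℝ} (hD : 0 ≤ D)
    (h : ∫ ω, (f ω)^4 ∂μ ≤ D^4) : eLpNorm f 4 μ ≤ ENNReal.ofReal D := by
  rw [hf.eLpNorm_eq_integral_rpow_norm (by norm_num) (by norm_num)]
  apply ENNReal.ofReal_le_ofReal
  have hI : (∫ ω, ‖f ω‖ ^ ((4:ℝ≥0∞).toReal) ∂μ) = ∫ ω, (f ω)^4 ∂μ :=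
    integral_congr_ae (ae_of_all _ fun ω => norm_rpow_four (f ω))
  rw [hI]
  have hInn : 0 ≤ ∫ ω, (f ω)^4 ∂μ := integral_nonneg fun ω => by positivity
  calc (∫ ω, (f ω)^4 ∂μ) ^ ((4:ℝ≥0∞).toReal)⁻¹ ≤ (D^4) ^ ((4:ℝ≥0∞).toReal)⁻¹ :=
        Real.rpow_le_rpow hInn h (by positivity)
    _ = D := by
        rw [← Real.rpow_natCast D 4, ← Real.rpow_mul hD,
          show (((4:ℕ):ℝ) * ((4:ℝ≥0∞).toReal)⁻¹) = 1 by norm_num, Real.rpow_one]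



lemma indep_pow_pow {X : ℕ → Ω → ℝ} {m : ℕ}
    (hInd : ∀ a : ℕ, IndepFun (fun ω => fun i : {i : ℕ // i ≤ a} => X (i : ℕ) ω)
        (fun ω => fun j : {j : ℕ // a + m < j} => X (j : ℕ) ω) μ)
    (c : ℕ → ℝ) (s : Finset ℕ) (a r : ℕ) (hs : ∀ j ∈ s, j ≤ a) (hr : a + m < r)
    (e e' : ℕ) :
    IndepFun (fun ω => (∑ j ∈ s, c j * X j ω)^e) (fun ω => (c r * X r ω)^e') μ := by
  have hφ : Measurable (fun f : ({i : ℕ // i ≤ a} → ℝ) =>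
      (∑ j ∈ s.attach, c (j:ℕ) * f ⟨(j:ℕ), hs j.1 j.2⟩)^e) := by
    apply Measurable.pow_const
    exact Finset.measurable_sum _ fun j _ => (measurable_pi_apply _).const_mul _
  have hψ : Measurable (fun g : ({j : ℕ // a + m < j} → ℝ) => (c r * g ⟨r, hr⟩)^e') := by
    apply Measurable.pow_const
    exact (measurable_pi_apply _).const_mul _
  have h := (hInd a).comp hφ hψ
  have h1 : ((fun f : ({i : ℕ // i ≤ a} → ℝ) =>
      (∑ j ∈ s.attach, c (j:ℕ) * f ⟨(j:ℕ), hs j.1 j.2⟩)^e) ∘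
      (fun ω => fun i : {i : ℕ // i ≤ a} => X (i : ℕ) ω)) =
      fun ω => (∑ j ∈ s, c j * X j ω)^e := by
    funext ω
    simp only [Function.comp_apply]
    rw [Finset.sum_attach s (fun j => c j * X j ω)]
  have h2 : ((fun g : ({j : ℕ // a + m < j} → ℝ) => (c r * g ⟨r, hr⟩)^e') ∘
      (fun ω => fun j : {j : ℕ // a + m < j} => X (j : ℕ) ω)) =
      fun ω => (c r * X r ω)^e' := rfl
  rwa [h1, h2] at h

lemma moment_step {Y T' : Ω → ℝ} {B : ℝ} (hB : 0 ≤ B)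
    (hYmeas : Measurable Y) (hT'meas : Measurable T')
    (hY4 : MemLp Y 4 μ) (hT'4 : MemLp T' 4 μ)
    (hInd2 : ∀ e e' : ℕ, IndepFun (fun ω => T' ω ^ e) (fun ω => Y ω ^ e') μ)
    (hYmean : ∫ ω, Y ω ∂μ = 0) (hT'mean : ∫ ω, T' ω ∂μ = 0)
    (hY2 : ∫ ω, (Y ω)^2 ∂μ ≤ B^2) (hY4m : ∫ ω, (Y ω)^4 ∂μ ≤ B^4)
    {k : ℝ} (hk : 0 ≤ k)
    (hT'2 : ∫ ω, (T' ω)^2 ∂μ ≤ k*B^2) (hT'4m : ∫ ω, (T' ω)^4 ∂μ ≤ 3*k^2*B^4) :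
    (∫ ω, (Y ω + T' ω)^2 ∂μ ≤ (k+1)*B^2) ∧
    (∫ ω, (Y ω + T' ω)^4 ∂μ ≤ 3*(k+1)^2*B^4) := by
  have e40 : (fun ω => T' ω * T' ω * T' ω * T' ω) = fun ω => T' ω^4 := funext fun ω => by ring
  have i40 : Integrable (fun ω => T' ω^4) μ := e40 ▸ integrable_mul4 hT'4 hT'4 hT'4 hT'4
  have e31 : (fun ω => T' ω * T' ω * T' ω * Y ω) = fun ω => T' ω^3 * Y ω :=
    funext fun ω => by ring
  have i31 : Integrable (fun ω => T' ω^3 * Y ω) μ := e31 ▸ integrable_mul4 hT'4 hT'4 hT'4 hY4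
  have e22 : (fun ω => T' ω * T' ω * Y ω * Y ω) = fun ω => T' ω^2 * Y ω^2 :=
    funext fun ω => by ring
  have i22 : Integrable (fun ω => T' ω^2 * Y ω^2) μ := e22 ▸ integrable_mul4 hT'4 hT'4 hY4 hY4
  have e13 : (fun ω => T' ω * Y ω * Y ω * Y ω) = fun ω => T' ω * Y ω^3 :=
    funext fun ω => by ring
  have i13 : Integrable (fun ω => T' ω * Y ω^3) μ := e13 ▸ integrable_mul4 hT'4 hY4 hY4 hY4
  have e04 : (fun ω => Y ω * Y ω * Y ω * Y ω) = fun ω => Y ω^4 := funext fun ω => by ring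
  have i04 : Integrable (fun ω => Y ω^4) μ := e04 ▸ integrable_mul4 hY4 hY4 hY4 hY4
  have e20 : (fun ω => T' ω * T' ω) = fun ω => T' ω^2 := funext fun ω => by ring
  have i20 : Integrable (fun ω => T' ω^2) μ :=
    e20 ▸ (memL2_mul hT'4 hT'4).integrable (by norm_num)
  have i11 : Integrable (fun ω => T' ω * Y ω) μ :=
    (memL2_mul hT'4 hY4).integrable (by norm_num)
  have e02 : (fun ω => Y ω * Y ω) = fun ω => Y ω^2 := funext fun ω => by ring
  have i02 : Integrable (fun ω => Y ω^2) μ :=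
    e02 ▸ (memL2_mul hY4 hY4).integrable (by norm_num)
  -- independence products
  have m31 : ∫ ω, T' ω^3 * Y ω ∂μ = 0 := by
    have h : IndepFun (fun ω => T' ω^3) Y μ := by simpa [pow_one] using hInd2 3 1
    rw [h.integral_fun_mul_eq_mul_integral ((hT'meas.pow_const 3).aestronglyMeasurable)
      hYmeas.aestronglyMeasurable, hYmean, mul_zero]
  have m13 : ∫ ω, T' ω * Y ω^3 ∂μ = 0 := by
    have h : IndepFun T' (fun ω => Y ω^3) μ := by simpa [pow_one] using hInd2 1 3
    rw [h.integral_fun_mul_eq_mul_integral hT'meas.aestronglyMeasurable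
      ((hYmeas.pow_const 3).aestronglyMeasurable), hT'mean, zero_mul]
  have m11 : ∫ ω, T' ω * Y ω ∂μ = 0 := by
    have h : IndepFun T' Y μ := by simpa [pow_one] using hInd2 1 1
    rw [h.integral_fun_mul_eq_mul_integral hT'meas.aestronglyMeasurable hYmeas.aestronglyMeasurable,
      hT'mean, zero_mul]
  have m22 : ∫ ω, T' ω^2 * Y ω^2 ∂μ = (∫ ω, T' ω^2 ∂μ) * (∫ ω, Y ω^2 ∂μ) :=
    (hInd2 2 2).integral_fun_mul_eq_mul_integral ((hT'meas.pow_const 2).aestronglyMeasurable)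
      ((hYmeas.pow_const 2).aestronglyMeasurable)
  constructor
  · have ex2 : ∀ ω, (Y ω + T' ω)^2 = T' ω^2 + (2*(T' ω * Y ω) + Y ω^2) := fun ω => by ring
    calc ∫ ω, (Y ω + T' ω)^2 ∂μ
        = ∫ ω, (T' ω^2 + (2*(T' ω * Y ω) + Y ω^2)) ∂μ :=
          integral_congr_ae (ae_of_all _ ex2)
      _ = (∫ ω, T' ω^2 ∂μ) + ((2 : ℝ) * (∫ ω, T' ω * Y ω ∂μ) + ∫ ω, Y ω^2 ∂μ) := by
          have h1 : ∫ ω, (T' ω^2 + (2*(T' ω * Y ω) + Y ω^2)) ∂μ =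
              (∫ ω, T' ω^2 ∂μ) + ∫ ω, (2*(T' ω * Y ω) + Y ω^2) ∂μ :=
            integral_add i20 ((i11.const_mul 2).add i02)
          have h2 : ∫ ω, (2*(T' ω * Y ω) + Y ω^2) ∂μ =
              (∫ ω, 2*(T' ω * Y ω) ∂μ) + ∫ ω, Y ω^2 ∂μ :=
            integral_add (i11.const_mul 2) i02
          rw [h1, h2, integral_const_mul]
      _ ≤ k*B^2 + (2*0 + B^2) := by rw [m11]; linarith
      _ = (k+1)*B^2 := by ring
  · have ex4 : ∀ ω, (Y ω + T' ω)^4 =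
        T' ω^4 + (4*(T' ω^3*Y ω) + (6*(T' ω^2*Y ω^2) + (4*(T' ω*Y ω^3) + Y ω^4))) :=
      fun ω => by ring
    have hT'2nn : 0 ≤ ∫ ω, (T' ω)^2 ∂μ := integral_nonneg fun ω => by positivity
    have hprod : (∫ ω, T' ω^2 ∂μ) * (∫ ω, Y ω^2 ∂μ) ≤ (k*B^2) * B^2 :=
      mul_le_mul hT'2 hY2 (integral_nonneg fun ω => by positivity) (by positivity)
    calc ∫ ω, (Y ω + T' ω)^4 ∂μ
        = ∫ ω, (T' ω^4 + (4*(T' ω^3*Y ω) + (6*(T' ω^2*Y ω^2) + (4*(T' ω*Y ω^3) + Y ω^4)))) ∂μ :=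
          integral_congr_ae (ae_of_all _ ex4)
      _ = (∫ ω, T' ω^4 ∂μ) + ((4:ℝ)*(∫ ω, T' ω^3*Y ω ∂μ) +
            ((6:ℝ)*(∫ ω, T' ω^2*Y ω^2 ∂μ) + ((4:ℝ)*(∫ ω, T' ω*Y ω^3 ∂μ) + ∫ ω, Y ω^4 ∂μ))) := by
          have h1 : ∫ ω, (T' ω^4 + (4*(T' ω^3*Y ω) + (6*(T' ω^2*Y ω^2) +
                (4*(T' ω*Y ω^3) + Y ω^4)))) ∂μ =
              (∫ ω, T' ω^4 ∂μ) + ∫ ω, (4*(T' ω^3*Y ω) + (6*(T' ω^2*Y ω^2) +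
                (4*(T' ω*Y ω^3) + Y ω^4))) ∂μ :=
            integral_add i40 ((i31.const_mul 4).add ((i22.const_mul 6).add
              ((i13.const_mul 4).add i04)))
          have h2 : ∫ ω, (4*(T' ω^3*Y ω) + (6*(T' ω^2*Y ω^2) + (4*(T' ω*Y ω^3) + Y ω^4))) ∂μ =
              (∫ ω, 4*(T' ω^3*Y ω) ∂μ) + ∫ ω, (6*(T' ω^2*Y ω^2) +
                (4*(T' ω*Y ω^3) + Y ω^4)) ∂μ :=
            integral_add (i31.const_mul 4) ((i22.const_mul 6).add ((i13.const_mul 4).add i04))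
          have h3 : ∫ ω, (6*(T' ω^2*Y ω^2) + (4*(T' ω*Y ω^3) + Y ω^4)) ∂μ =
              (∫ ω, 6*(T' ω^2*Y ω^2) ∂μ) + ∫ ω, (4*(T' ω*Y ω^3) + Y ω^4) ∂μ :=
            integral_add (i22.const_mul 6) ((i13.const_mul 4).add i04)
          have h4 : ∫ ω, (4*(T' ω*Y ω^3) + Y ω^4) ∂μ =
              (∫ ω, 4*(T' ω*Y ω^3) ∂μ) + ∫ ω, Y ω^4 ∂μ :=
            integral_add (i13.const_mul 4) i04
          rw [h1, h2, h3, h4, integral_const_mul, integral_const_mul, integral_const_mul]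
      _ ≤ 3*k^2*B^4 + (4*0 + (6*((k*B^2)*B^2) + (4*0 + B^4))) := by
          rw [m31, m13, m22]
          have h6 : (6:ℝ)*((∫ ω, T' ω^2 ∂μ) * (∫ ω, Y ω^2 ∂μ)) ≤ 6*((k*B^2)*B^2) := by linarith
          linarith
      _ ≤ 3*(k+1)^2*B^4 := by nlinarith [pow_nonneg hB 4, hk]

lemma core_moments {X : ℕ → Ω → ℝ} {m : ℕ} {c : ℕ → ℝ} {B : ℝ}
    (hXm : ∀ i, Measurable (X i)) (hX4 : ∀ i, MemLp (X i) 4 μ)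
    (hXmean : ∀ i, ∫ ω, X i ω ∂μ = 0)
    (hInd : ∀ a : ℕ, IndepFun (fun ω => fun i : {i : ℕ // i ≤ a} => X (i : ℕ) ω)
        (fun ω => fun j : {j : ℕ // a + m < j} => X (j : ℕ) ω) μ)
    (hB : 0 ≤ B) (hc4 : ∀ j, ∫ ω, (c j * X j ω)^4 ∂μ ≤ B^4)
    (S : Finset ℕ) (hgap : ∀ x ∈ S, ∀ y ∈ S, x < y → x + m < y) :
    MemLp (fun ω => ∑ j ∈ S, c j * X j ω) 4 μ ∧
    (∫ ω, (∑ j ∈ S, c j * X j ω) ∂μ = 0) ∧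
    (∫ ω, (∑ j ∈ S, c j * X j ω)^2 ∂μ ≤ (S.card : ℝ) * B^2) ∧
    (∫ ω, (∑ j ∈ S, c j * X j ω)^4 ∂μ ≤ 3 * (S.card : ℝ)^2 * B^4) := by
  revert hgap
  induction S using Finset.induction_on_max with
  | empty =>
    intro _
    refine ⟨?_, ?_, ?_, ?_⟩ <;> simp [Finset.sum_empty]
  | insert r s hlt ih =>
    intro hgap
    have hgs : ∀ x ∈ s, ∀ y ∈ s, x < y → x + m < y := fun x hx y hy =>
      hgap x (Finset.mem_insert_of_mem hx) y (Finset.mem_insert_of_mem hy)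
    obtain ⟨ihL, ihM, ih2, ih4⟩ := ih hgs
    have hrs : r ∉ s := fun h => lt_irrefl r (hlt r h)
    have hYmeas : Measurable (fun ω => c r * X r ω) := (hXm r).const_mul _
    have hT'meas : Measurable (fun ω => ∑ j ∈ s, c j * X j ω) :=
      Finset.measurable_sum _ fun j _ => (hXm j).const_mul _
    have hY4 : MemLp (fun ω => c r * X r ω) 4 μ := (hX4 r).const_mul _
    have hYmean : ∫ ω, c r * X r ω ∂μ = 0 := by rw [integral_const_mul, hXmean r, mul_zero]
    have hY4m := hc4 r
    have hY2 : ∫ ω, (c r * X r ω)^2 ∂μ ≤ B^2 := sq_moment_le hY4 hB hY4m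
    have hL : MemLp (fun ω => c r * X r ω + ∑ j ∈ s, c j * X j ω) 4 μ := hY4.add ihL
    have hMean : ∫ ω, (c r * X r ω + ∑ j ∈ s, c j * X j ω) ∂μ = 0 := by
      rw [integral_add (hY4.integrable (by norm_num)) (ihL.integrable (by norm_num)),
        hYmean, ihM, add_zero]
    have hcard : (((insert r s).card : ℕ) : ℝ) = (s.card : ℝ) + 1 := by
      rw [Finset.card_insert_of_notMem hrs]; push_cast; ring
    simp only [Finset.sum_insert hrs]
    rcases s.eq_empty_or_nonempty with hemp | ⟨x, hx⟩
    · subst hemp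
      simp only [Finset.sum_empty, add_zero] at hL hMean ⊢
      refine ⟨hL, hMean, ?_, ?_⟩
      · rw [hcard]; simpa using hY2.trans (by nlinarith [sq_nonneg B])
      · rw [hcard]
        have : (3:ℝ) * ((0:ℝ)+1)^2 * B^4 = 3 * B^4 := by ring
        simp only [Finset.card_empty, Nat.cast_zero] at *
        calc ∫ ω, (c r * X r ω)^4 ∂μ ≤ B^4 := hY4m
          _ ≤ 3 * ((0:ℝ)+1)^2 * B^4 := by nlinarith [pow_nonneg hB 4]
    · have hxr : x + m < r := hgap x (Finset.mem_insert_of_mem hx) r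
        (Finset.mem_insert_self r s) (hlt x hx)
      have hsa : ∀ j ∈ s, j ≤ r - (m+1) := fun j hj => by
        have := hgap j (Finset.mem_insert_of_mem hj) r (Finset.mem_insert_self r s) (hlt j hj)
        omega
      have har : (r - (m+1)) + m < r := by omega
      have hInd2 : ∀ e e' : ℕ, IndepFun (fun ω => (∑ j ∈ s, c j * X j ω)^e)
          (fun ω => (c r * X r ω)^e') μ :=
        fun e e' => indep_pow_pow hInd c s (r - (m+1)) r hsa har e e'
      have hstep := moment_step hB hYmeas hT'meas hY4 ihL hInd2 hYmean ihM hY2 hY4m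
        (k := (s.card : ℝ)) (Nat.cast_nonneg _) ih2 ih4
      refine ⟨hL, hMean, ?_, ?_⟩
      · rw [hcard]; exact hstep.1
      · rw [hcard]; exact hstep.2

end Helpers

/-- Kernel-weighted sums of an m-dependent zero-mean array: there is a universal
constant `C` (depending only on the `L⁴` Burkholder constant) such that for every
kernel `K` bounded by `κ` and supported on `[-1,1]`, bandwidth `b` with `nb ≥ 1`,
and zero-mean m-dependent array `(X_i)` with `sup_i ‖X_i‖_{L⁴} ≤ M`,
`max_{1≤i≤n} ‖Σ_{j=1}^n K((t_i - t_j)/b) X_j‖_{L⁴} ≤ C κ M (m+1) √(nb)`,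
where `t_j = j/n`. -/
theorem stmt_16 :
    ∃ C : ℝ, 0 < C ∧
    ∀ (Ω : Type) [MeasurableSpace Ω] (μ : Measure Ω), IsProbabilityMeasure μ →
    ∀ (κ : ℝ), 0 < κ →
    ∀ (K : ℝ → ℝ), (∀ x, |K x| ≤ κ) → (∀ x, x ∉ Set.Icc (-1 : ℝ) 1 → K x = 0) →
    ∀ (n m : ℕ) (b : ℝ), 0 < b → 1 ≤ (n : ℝ) * b →
    ∀ (X : ℕ → Ω → ℝ), (∀ i, Measurable (X i)) →
    (∀ i, MemLp (X i) 4 μ) →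
    (∀ i, ∫ ω, X i ω ∂μ = 0) →
    ∀ (M : ℝ), 0 ≤ M → (∀ i, eLpNorm (X i) 4 μ ≤ ENNReal.ofReal M) →
    (∀ a : ℕ, IndepFun (fun ω => fun i : {i : ℕ // i ≤ a} => X (i : ℕ) ω)
        (fun ω => fun j : {j : ℕ // a + m < j} => X (j : ℕ) ω) μ) →
    ∀ i : ℕ, 1 ≤ i → i ≤ n →
      eLpNorm (fun ω => ∑ j ∈ Finset.Icc 1 n,
          K (((i : ℝ) / n - (j : ℝ) / n) / b) * X j ω) 4 μ ≤
        ENNReal.ofReal (C * κ * M * ((m : ℝ) + 1) * Real.sqrt ((n : ℝ) * b)) := by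
  refine ⟨3, by norm_num, ?_⟩
  intro Ω _ μ hμ κ hκ K hKb hKs n m b hb hnb X hXm hX4 hXmean M hM hXM hInd i hi1 hin
  haveI := hμ
  classical
  set c : ℕ → ℝ := fun j => K (((i : ℝ) / n - (j : ℝ) / n) / b) with hc
  have hn1 : (1:ℝ) ≤ (n:ℝ) := by exact_mod_cast le_trans hi1 hin
  have hn0 : (0:ℝ) < n := lt_of_lt_of_le one_pos hn1
  have hnb0 : (0:ℝ) < (n:ℝ)*b := lt_of_lt_of_le one_pos hnb
  -- support of c
  have hsupp : ∀ j : ℕ, c j ≠ 0 → |(i:ℝ) - (j:ℝ)| ≤ (n:ℝ)*b := by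
    intro j hj
    by_contra hcon
    push_neg at hcon
    apply hj
    apply hKs
    intro hmem
    have hx : |((i:ℝ)/n - (j:ℝ)/n)/b| ≤ 1 := abs_le.mpr ⟨hmem.1, hmem.2⟩
    have heq : ((i:ℝ)/n - (j:ℝ)/n)/b = ((i:ℝ) - (j:ℝ))/((n:ℝ)*b) := by
      rw [div_sub_div_same, div_div]
    rw [heq, abs_div, abs_of_pos hnb0, div_le_one hnb0] at hx
    linarith
  -- the support set A and its cardinality
  set N : ℕ := ⌈(n:ℝ)*b⌉₊ with hN
  set A : Finset ℕ := (Finset.Icc 1 n).filter (fun j => c j ≠ 0) with hA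
  have hAsub : A ⊆ Finset.Icc (i - N) (i + N) := by
    intro j hj
    rw [hA, Finset.mem_filter] at hj
    have h := hsupp j hj.2
    have hceil : (n:ℝ)*b ≤ (N:ℝ) := Nat.le_ceil _
    have habs := abs_le.mp h
    have h1 : (j:ℝ) ≤ (i:ℝ) + N := by linarith
    have h2 : (i:ℝ) ≤ (j:ℝ) + N := by linarith
    have h1' : j ≤ i + N := by exact_mod_cast (by push_cast; linarith : (j:ℝ) ≤ ((i + N : ℕ):ℝ))
    have h2' : i ≤ j + N := by exact_mod_cast (by push_cast; linarith : (i:ℝ) ≤ ((j + N : ℕ):ℝ))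
    rw [Finset.mem_Icc]
    omega
  have hAcard : (A.card : ℝ) ≤ 5*((n:ℝ)*b) := by
    have h1 : A.card ≤ (Finset.Icc (i - N) (i + N)).card := Finset.card_le_card hAsub
    rw [Nat.card_Icc] at h1
    have h2 : A.card ≤ 2*N + 1 := by omega
    have h3 : (N:ℝ) < (n:ℝ)*b + 1 := Nat.ceil_lt_add_one (le_of_lt hnb0)
    have h4 : (A.card : ℝ) ≤ 2*(N:ℝ) + 1 := by exact_mod_cast h2
    linarith
  -- fourth moment of single terms
  have hB : (0:ℝ) ≤ κ * M := mul_nonneg (le_of_lt hκ) hM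
  have hc4 : ∀ j, ∫ ω, (c j * X j ω)^4 ∂μ ≤ (κ*M)^4 := by
    intro j
    have he : ∀ ω, (c j * X j ω)^4 = (c j)^4 * (X j ω)^4 := fun ω => by ring
    rw [integral_congr_ae (ae_of_all _ he), integral_const_mul]
    have hX4m : ∫ ω, (X j ω)^4 ∂μ ≤ M^4 := moment4_le_of_eLpNorm (hX4 j) hM (hXM j)
    have hXnn : 0 ≤ ∫ ω, (X j ω)^4 ∂μ := integral_nonneg fun ω => by positivity
    have hcj : (c j)^4 ≤ κ^4 := by
      calc (c j)^4 = |c j|^4 := by rw [← abs_pow, abs_of_nonneg (by positivity)]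
        _ ≤ κ^4 := pow_le_pow_left₀ (abs_nonneg _) (hKb _) 4
    calc (c j)^4 * ∫ ω, (X j ω)^4 ∂μ ≤ κ^4 * M^4 :=
          mul_le_mul hcj hX4m hXnn (by positivity)
      _ = (κ*M)^4 := (mul_pow κ M 4).symm
  -- residue classes
  set St : ℕ → Finset ℕ := fun t => A.filter (fun j => j % (m+1) = t) with hSt
  have hgapSt : ∀ t, ∀ x ∈ St t, ∀ y ∈ St t, x < y → x + m < y := by
    intro t x hx y hy hxy
    rw [hSt, Finset.mem_filter] at hx hy
    have hmod : x % (m+1) = y % (m+1) := by rw [hx.2, hy.2]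
    have hdvd : (m+1) ∣ y - x := (Nat.modEq_iff_dvd' (le_of_lt hxy)).mp hmod
    have hle : m + 1 ≤ y - x := Nat.le_of_dvd (by omega) hdvd
    omega
  have hcore := fun t => core_moments hXm hX4 hXmean hInd hB hc4 (St t) (hgapSt t)
  -- bound per class
  set D : ℝ := 3 * Real.sqrt ((n:ℝ)*b) * (κ*M) with hD
  have hD0 : 0 ≤ D := by positivity
  have hclass : ∀ t, eLpNorm (fun ω => ∑ j ∈ St t, c j * X j ω) 4 μ ≤ ENNReal.ofReal D := by
    intro t
    apply eLpNorm_le_of_moment4 (hcore t).1 hD0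
    have hu : ((St t).card : ℝ) ≤ 5*((n:ℝ)*b) := by
      have : (St t).card ≤ A.card := Finset.card_le_card (Finset.filter_subset _ _)
      calc ((St t).card : ℝ) ≤ (A.card : ℝ) := by exact_mod_cast this
        _ ≤ 5*((n:ℝ)*b) := hAcard
    have hu0 : (0:ℝ) ≤ ((St t).card : ℝ) := Nat.cast_nonneg _
    have hsq : (((St t).card : ℝ))^2 ≤ 25*((n:ℝ)*b)^2 := by nlinarith
    have hD4 : D^4 = 81 * ((n:ℝ)*b)^2 * (κ*M)^4 := by
      have hs4 : (Real.sqrt ((n:ℝ)*b))^4 = ((n:ℝ)*b)^2 := by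
        rw [show (Real.sqrt ((n:ℝ)*b))^4 = ((Real.sqrt ((n:ℝ)*b))^2)^2 by ring,
          Real.sq_sqrt (le_of_lt hnb0)]
      rw [hD]
      calc (3 * Real.sqrt ((n:ℝ)*b) * (κ*M))^4
          = 81 * (Real.sqrt ((n:ℝ)*b))^4 * (κ*M)^4 := by ring
        _ = 81 * ((n:ℝ)*b)^2 * (κ*M)^4 := by rw [hs4]
    calc ∫ ω, (∑ j ∈ St t, c j * X j ω)^4 ∂μ
        ≤ 3 * (((St t).card : ℝ))^2 * (κ*M)^4 := (hcore t).2.2.2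
      _ ≤ D^4 := by rw [hD4]; nlinarith [pow_nonneg hB 4, sq_nonneg ((n:ℝ)*b)]
  -- reassemble
  have h0 : ∀ ω, ∑ j ∈ Finset.Icc 1 n, c j * X j ω =
      ∑ t ∈ Finset.range (m+1), ∑ j ∈ St t, c j * X j ω := by
    intro ω
    have h1 : ∑ j ∈ A, c j * X j ω = ∑ j ∈ Finset.Icc 1 n, c j * X j ω := by
      rw [hA]
      exact Finset.sum_filter_of_ne (fun x _ hfx hc0 => hfx (by rw [hc0, zero_mul]))
    have h2 : ∑ t ∈ Finset.range (m+1), ∑ j ∈ A.filter (fun j => j % (m+1) = t),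
        c j * X j ω = ∑ j ∈ A, c j * X j ω :=
      Finset.sum_fiberwise_of_maps_to
        (fun j _ => Finset.mem_range.mpr (Nat.mod_lt _ (Nat.succ_pos m))) _
    rw [← h1, ← h2]
  calc eLpNorm (fun ω => ∑ j ∈ Finset.Icc 1 n,
          K (((i : ℝ) / n - (j : ℝ) / n) / b) * X j ω) 4 μ
      = eLpNorm (∑ t ∈ Finset.range (m+1),
          (fun ω => ∑ j ∈ St t, c j * X j ω)) 4 μ := by
        congr 1
        funext ω
        simp only [Finset.sum_apply]
        exact h0 ω
    _ ≤ ∑ t ∈ Finset.range (m+1),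
          eLpNorm (fun ω => ∑ j ∈ St t, c j * X j ω) 4 μ :=
        eLpNorm_sum_le (fun t _ =>
          (Finset.measurable_sum _ fun j _ => (hXm j).const_mul _).aestronglyMeasurable)
          (by norm_num)
    _ ≤ ∑ t ∈ Finset.range (m+1), ENNReal.ofReal D :=
        Finset.sum_le_sum fun t _ => hclass t
    _ = ((m+1 : ℕ) : ℝ≥0∞) * ENNReal.ofReal D := by
        rw [Finset.sum_const, Finset.card_range, nsmul_eq_mul]
    _ = ENNReal.ofReal (((m:ℝ)+1) * D) := by
        rw [← ENNReal.ofReal_natCast (m+1), ← ENNReal.ofReal_mul (Nat.cast_nonneg _)]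
        congr 1
        push_cast
        ring
    _ ≤ ENNReal.ofReal (3 * κ * M * ((m : ℝ) + 1) * Real.sqrt ((n : ℝ) * b)) := by
        apply ENNReal.ofReal_le_ofReal
        rw [hD]
        ring_nf
        exact le_refl _
end
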